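/- arXiv:2407.01345 — 2 statements merged into one kernel-verified Lean document; each statement's English description precedes it below -/
import Mathlib

section
/- Let ν ∈ ℝ, a ∈ ℂ \ {0} and m ∈ ℕ. The transform κ_{-1,-ν} intertwines the operators E⁻_{a,m} and -E⁻_{-a,m}: for every twice differentiable f : (0,∞) → ℂ and every r > 0, κ_{-1,-ν}(E⁻_{a,m} f)(r) = -E⁻_{-a,m}(κ_{-1,-ν} f)(r), where (E⁻_{a,m} f)(r) = (i/a) r^{-a} (r² f''(r) + (ν + 1) r f'(r) - m(ν + m) f(r)) and (E⁻_{-a,m} g)(r) = (i/(-a)) r^{a} (r² g''(r) + (ν + 1) r g'(r) - m(ν + m) g(r)). -/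
open Real Complex

/-- The transform `κ_{α,β}` acting on functions on `(0,∞)`:
`(κ_{α,β} f)(r) = r^β f(r^α)`; in particular `(κ_{-1,-ν} f)(r) = r^{-ν} f(1/r)`. -/
noncomputable def kappa (α β : ℝ) (f : ℝ → ℂ) (r : ℝ) : ℂ :=
  ((r ^ β : ℝ) : ℂ) * f (r ^ α)

/-- The operator `E⁻_{a,m} = (i/a) r^{-a} (ϑ - m)(ϑ + ν + m)`:
`(E⁻_{a,m} f)(r) = (i/a) r^{-a} (r² f''(r) + (ν+1) r f'(r) - m(ν+m) f(r))`,
where `r^{-a}` is the complex power of the positive real `r`. -/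
noncomputable def Eminus (ν : ℝ) (a : ℂ) (m : ℕ) (f : ℝ → ℂ) (r : ℝ) : ℂ :=
  Complex.I / a * (r : ℂ) ^ (-a) *
    ((r : ℂ) ^ 2 * deriv (deriv f) r + ((ν : ℂ) + 1) * (r : ℂ) * deriv f r
      - (m : ℂ) * ((ν : ℂ) + (m : ℂ)) * f r)

lemma hasDerivAt_P (t : ℝ) {s : ℝ} (hs : 0 < s) :
    HasDerivAt (fun x : ℝ => ((x ^ t : ℝ) : ℂ)) (((t * s ^ (t - 1) : ℝ) : ℂ)) s :=
  (Real.hasDerivAt_rpow_const (Or.inl hs.ne')).ofReal_comp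

lemma hasDerivAt_finv (f : ℝ → ℂ) {s : ℝ} (hs : 0 < s) (hf : DifferentiableAt ℝ f s⁻¹) :
    HasDerivAt (fun x : ℝ => f x⁻¹) ((-(s ^ 2)⁻¹ : ℝ) • deriv f s⁻¹) s :=
  hf.hasDerivAt.scomp s (hasDerivAt_inv hs.ne')

/-- `κ_{-1,-ν}` intertwines `E⁻_{a,m}` and `-E⁻_{-a,m}`: for every twice differentiable
`f : (0,∞) → ℂ` and every `r > 0`,
`κ_{-1,-ν}(E⁻_{a,m} f)(r) = -E⁻_{-a,m}(κ_{-1,-ν} f)(r)`. -/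
theorem kappa_intertwines_Eminus (ν : ℝ) (a : ℂ) (ha : a ≠ 0) (m : ℕ) (f : ℝ → ℂ)
    (hf : ∀ s : ℝ, 0 < s → DifferentiableAt ℝ f s)
    (hf' : ∀ s : ℝ, 0 < s → DifferentiableAt ℝ (deriv f) s)
    (r : ℝ) (hr : 0 < r) :
    kappa (-1) (-ν) (Eminus ν a m f) r = -(Eminus ν (-a) m (kappa (-1) (-ν) f) r) := by
  set G : ℝ → ℂ := fun x => ((x ^ (-ν) : ℝ) : ℂ) * f x⁻¹ with hGdef
  set G1 : ℝ → ℂ := fun x =>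
    (-ν : ℂ) * (((x ^ (-ν - 1) : ℝ) : ℂ) * f x⁻¹) - ((x ^ (-ν - 2) : ℝ) : ℂ) * deriv f x⁻¹
    with hG1def
  have hEq : Set.EqOn (kappa (-1) (-ν) f) G (Set.Ioi 0) := by
    intro x hx
    simp only [kappa, hGdef, Real.rpow_neg_one]
  have hEqF : ∀ s : ℝ, 0 < s → kappa (-1) (-ν) f =ᶠ[nhds s] G := fun s hs =>
    Filter.eventuallyEq_of_mem (isOpen_Ioi.mem_nhds hs) hEq
  have hG1 : ∀ x : ℝ, 0 < x → HasDerivAt G (G1 x) x := by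
    intro x hx
    have hx' : 0 < x⁻¹ := inv_pos.mpr hx
    have h := (hasDerivAt_P (-ν) hx).mul (hasDerivAt_finv f hx (hf _ hx'))
    convert h using 1
    · rfl
    · rfl
    have e : x ^ (-ν - 2) = x ^ (-ν) * (x ^ 2)⁻¹ := by
      rw [Real.rpow_sub hx, show (2:ℝ) = ((2:ℕ):ℝ) from by norm_num, Real.rpow_natCast,
        div_eq_mul_inv]
    rw [hG1def]
    simp only [e, Complex.real_smul]
    push_cast
    ring
  have hd1 : Set.EqOn (deriv (kappa (-1) (-ν) f)) G1 (Set.Ioi 0) := by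
    intro x hx
    rw [(hEqF x hx).deriv_eq]
    exact (hG1 x hx).deriv
  -- second derivative at r
  have hG2 : HasDerivAt G1
      ((-ν : ℂ) * ((((-ν - 1) * r ^ (-ν - 1 - 1) : ℝ) : ℂ) * f r⁻¹
          + ((r ^ (-ν - 1) : ℝ) : ℂ) * ((-(r ^ 2)⁻¹ : ℝ) • deriv f r⁻¹))
        - ((((-ν - 2) * r ^ (-ν - 2 - 1) : ℝ) : ℂ) * deriv f r⁻¹
          + ((r ^ (-ν - 2) : ℝ) : ℂ) * ((-(r ^ 2)⁻¹ : ℝ) • deriv (deriv f) r⁻¹))) r := by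
    have hr' : 0 < r⁻¹ := inv_pos.mpr hr
    exact (((hasDerivAt_P (-ν - 1) hr).mul (hasDerivAt_finv f hr (hf _ hr'))).const_mul
      (-ν : ℂ)).sub ((hasDerivAt_P (-ν - 2) hr).mul (hasDerivAt_finv (deriv f) hr (hf' _ hr')))
  have hderiv2 : deriv (deriv (kappa (-1) (-ν) f)) r
      = (-ν : ℂ) * ((((-ν - 1) * r ^ (-ν - 1 - 1) : ℝ) : ℂ) * f r⁻¹
          + ((r ^ (-ν - 1) : ℝ) : ℂ) * ((-(r ^ 2)⁻¹ : ℝ) • deriv f r⁻¹))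
        - ((((-ν - 2) * r ^ (-ν - 2 - 1) : ℝ) : ℂ) * deriv f r⁻¹
          + ((r ^ (-ν - 2) : ℝ) : ℂ) * ((-(r ^ 2)⁻¹ : ℝ) • deriv (deriv f) r⁻¹)) := by
    have h1 : deriv (kappa (-1) (-ν) f) =ᶠ[nhds r] G1 :=
      Filter.eventuallyEq_of_mem (isOpen_Ioi.mem_nhds hr) hd1
    rw [h1.deriv_eq]
    exact hG2.deriv
  -- cpow identity
  have hcp : ((r⁻¹ : ℝ) : ℂ) ^ (-a) = (r : ℂ) ^ a := by
    have harg : ((r : ℂ)).arg ≠ π := by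
      rw [Complex.arg_ofReal_of_nonneg hr.le]; exact Real.pi_ne_zero.symm
    push_cast
    rw [Complex.inv_cpow _ _ harg, Complex.cpow_neg, inv_inv]
  -- rpow decompositions
  set A : ℂ := ((r ^ (-ν) : ℝ) : ℂ) with hA
  have epow : ∀ k : ℕ, ((r ^ (-ν - (k : ℝ)) : ℝ) : ℂ) = A * ((r : ℂ) ^ k)⁻¹ := by
    intro k
    rw [Real.rpow_sub hr, Real.rpow_natCast]
    push_cast
    rw [div_eq_mul_inv]
  have e1 := epow 1
  have e2 := epow 2
  have e3 := epow 3
  norm_num at e1 e2 e3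
  have hrC : (r : ℂ) ≠ 0 := Complex.ofReal_ne_zero.mpr hr.ne'
  -- unfold everything
  rw [kappa, Real.rpow_neg_one]
  rw [Eminus, Eminus]
  rw [hderiv2, hd1 (Set.mem_Ioi.mpr hr), hEq (Set.mem_Ioi.mpr hr), hcp, neg_neg, hGdef, hG1def]
  simp only [Complex.real_smul]
  rw [show -ν - 1 - 1 = -ν - 2 from by ring, show -ν - 2 - 1 = -ν - 3 from by ring]
  simp only [Complex.ofReal_mul, Complex.ofReal_neg, Complex.ofReal_sub, Complex.ofReal_one,
    Complex.ofReal_ofNat, Complex.ofReal_inv, Complex.ofReal_pow, e1, e2, e3, ← hA]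
  have key : ∀ u v w : ℂ,
      (r : ℂ) ^ 2 * (-(ν:ℂ) * ((-(ν:ℂ) - 1) * (A * ((r:ℂ) ^ 2)⁻¹) * u
          + A * ((r:ℂ))⁻¹ * (-((r:ℂ) ^ 2)⁻¹ * v))
        - ((-(ν:ℂ) - 2) * (A * ((r:ℂ) ^ 3)⁻¹) * v
          + A * ((r:ℂ) ^ 2)⁻¹ * (-((r:ℂ) ^ 2)⁻¹ * w)))
      + ((ν:ℂ) + 1) * (r:ℂ) * (-(ν:ℂ) * (A * ((r:ℂ))⁻¹ * u) - A * ((r:ℂ) ^ 2)⁻¹ * v)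
      - (m:ℂ) * ((ν:ℂ) + (m:ℂ)) * (A * u)
      = A * (((r:ℂ))⁻¹ ^ 2 * w + ((ν:ℂ) + 1) * ((r:ℂ))⁻¹ * v
          - (m:ℂ) * ((ν:ℂ) + (m:ℂ)) * u) := by
    intro u v w
    have htr : (r : ℂ) * ((r : ℂ))⁻¹ = 1 := mul_inv_cancel₀ hrC
    linear_combination (A * ((ν:ℂ) * ((ν:ℂ) + 1) * u * ((r:ℂ) * ((r:ℂ))⁻¹)
      + ((ν:ℂ) + 1) * v * ((r:ℂ))⁻¹ * (2 * ((r:ℂ) * ((r:ℂ))⁻¹) + 1)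
      + w * ((r:ℂ))⁻¹ ^ 2 * ((r:ℂ) * ((r:ℂ))⁻¹ + 1))) * htr
  rw [div_neg]
  push_cast
  linear_combination (-(Complex.I / a * (r : ℂ) ^ a)) *
    key (f r⁻¹) (deriv f r⁻¹) (deriv (deriv f) r⁻¹)
end

section
/- Let ν ∈ ℝ, a > 0, m ∈ ℕ, λ = (ν + 2m)/a with λ > -1, and let f_l(r) = (2^{λ+1} l! / (a^λ Γ(λ + l + 1)))^{1/2} r^m L_l^{(λ)}((2/a) r^a) e^{-(1/a) r^a}. Then for every l ∈ ℕ and r > 0, (1/a)( r^a f_l(r) - r^{-a}( r² f_l''(r) + (ν + 1) r f_l'(r) - m(ν + m) f_l(r) ) ) = (λ + 2l + 1) f_l(r); that is, f_l is an eigenfunction of the operator π(𝐤) = (1/a)(r^a - r^{-a}(ϑ - m)(ϑ + ν + m)) with eigenvalue λ + 2l + 1. -/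
open Real

/-- The generalized Laguerre polynomial
`L_l^{(λ)}(t) = ∑_{j=0}^{l} ((-1)^j / (j!(l-j)!)) (Γ(λ+l+1)/Γ(λ+j+1)) t^j`. -/
noncomputable def laguerre (lam : ℝ) (l : ℕ) (t : ℝ) : ℝ :=
  ∑ j ∈ Finset.range (l + 1),
    (-1 : ℝ) ^ j / (j.factorial * (l - j).factorial) *
      (Real.Gamma (lam + l + 1) / Real.Gamma (lam + j + 1)) * t ^ j

/-- `f_l(r) = (2^{λ+1} l!/(a^λ Γ(λ+l+1)))^{1/2} r^m L_l^{(λ)}((2/a) r^a) e^{-(1/a) r^a}`. -/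
noncomputable def laguerreFun (ν a : ℝ) (m : ℕ) (l : ℕ) (r : ℝ) : ℂ :=
  ((Real.sqrt ((2 : ℝ) ^ ((ν + 2 * m) / a + 1) * l.factorial /
        (a ^ ((ν + 2 * m) / a) * Real.Gamma ((ν + 2 * m) / a + l + 1))) *
      r ^ m * laguerre ((ν + 2 * m) / a) l ((2 / a) * r ^ a) *
      Real.exp (-(1 / a) * r ^ a) : ℝ) : ℂ)

open Finset
noncomputable def Efun (a x : ℝ) : ℝ := Real.exp (-(1/a) * x ^ a)

lemma hasDerivAt_Efun {a : ℝ} (ha : a ≠ 0) {x : ℝ} (hx : 0 < x) :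
    HasDerivAt (Efun a) (-(x ^ (a-1)) * Efun a x) x := by
  have h1 : HasDerivAt (fun y : ℝ => y ^ a) (a * x ^ (a-1)) x :=
    Real.hasDerivAt_rpow_const (Or.inl hx.ne')
  have h2 := (h1.const_mul (-(1/a))).exp
  convert h2 using 1
  unfold Efun
  field_simp
  simp only [Efun, one_div]
  field_simp

noncomputable def dcoef (a lam C : ℝ) (l j : ℕ) : ℝ :=
  C * ((-1:ℝ)^j / (j.factorial * (l-j).factorial) *
    (Real.Gamma (lam+l+1)/Real.Gamma (lam+j+1))) * (2/a)^j

noncomputable def mufn (a : ℝ) (m j : ℕ) : ℝ := m + a*j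

noncomputable def Gfun (a lam C : ℝ) (m l : ℕ) (x : ℝ) : ℝ :=
  ∑ j ∈ Finset.range (l+1), dcoef a lam C l j * (x ^ (mufn a m j) * Efun a x)

noncomputable def G1fun (a lam C : ℝ) (m l : ℕ) (x : ℝ) : ℝ :=
  ∑ j ∈ Finset.range (l+1), dcoef a lam C l j *
    ((mufn a m j * x ^ (mufn a m j - 1) - x ^ (mufn a m j + a - 1)) * Efun a x)

noncomputable def G2fun (a lam C : ℝ) (m l : ℕ) (x : ℝ) : ℝ :=
  ∑ j ∈ Finset.range (l+1), dcoef a lam C l j *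
    ((mufn a m j * ((mufn a m j - 1) * x ^ (mufn a m j - 1 - 1)) -
       (mufn a m j + a - 1) * x ^ (mufn a m j + a - 1 - 1)) * Efun a x +
     (mufn a m j * x ^ (mufn a m j - 1) - x ^ (mufn a m j + a - 1)) *
       (-(x ^ (a-1)) * Efun a x))

lemma hasDerivAt_Gfun {a : ℝ} (ha : a ≠ 0) (lam C : ℝ) (m l : ℕ) {x : ℝ} (hx : 0 < x) :
    HasDerivAt (Gfun a lam C m l) (G1fun a lam C m l x) x := by
  apply HasDerivAt.fun_sum
  intro j _
  have h1 : HasDerivAt (fun y : ℝ => y ^ (mufn a m j)) (mufn a m j * x ^ (mufn a m j - 1)) x :=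
    Real.hasDerivAt_rpow_const (Or.inl hx.ne')
  have := (h1.mul (hasDerivAt_Efun ha hx)).const_mul (dcoef a lam C l j)
  simp only [Pi.mul_apply] at this
  refine this.congr_deriv ?_
  have hxa : x ^ (mufn a m j + a - 1) = x ^ (mufn a m j) * x ^ (a - 1) := by
    rw [← Real.rpow_add hx]; ring_nf
  rw [hxa]; ring

lemma hasDerivAt_G1fun {a : ℝ} (ha : a ≠ 0) (lam C : ℝ) (m l : ℕ) {x : ℝ} (hx : 0 < x) :
    HasDerivAt (G1fun a lam C m l) (G2fun a lam C m l x) x := by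
  apply HasDerivAt.fun_sum
  intro j _
  have h1 : HasDerivAt (fun y : ℝ => y ^ (mufn a m j - 1))
      ((mufn a m j - 1) * x ^ (mufn a m j - 1 - 1)) x :=
    Real.hasDerivAt_rpow_const (Or.inl hx.ne')
  have h2 : HasDerivAt (fun y : ℝ => y ^ (mufn a m j + a - 1))
      ((mufn a m j + a - 1) * x ^ (mufn a m j + a - 1 - 1)) x :=
    Real.hasDerivAt_rpow_const (Or.inl hx.ne')
  exact (((h1.const_mul (mufn a m j)).sub h2).mul (hasDerivAt_Efun ha hx)).const_mul _

lemma term_eigen {a : ℝ} (ha : a ≠ 0) (ν lam : ℝ) (m' j : ℕ) (hl : a * lam = ν + 2*m')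
    {r : ℝ} (hr : 0 < r) :
    (1/a) * (r ^ a * (r ^ (mufn a m' j) * Efun a r) -
      r ^ (-a) * (r ^ 2 *
          ((mufn a m' j * ((mufn a m' j - 1) * r ^ (mufn a m' j - 1 - 1)) -
             (mufn a m' j + a - 1) * r ^ (mufn a m' j + a - 1 - 1)) * Efun a r +
           (mufn a m' j * r ^ (mufn a m' j - 1) - r ^ (mufn a m' j + a - 1)) *
             (-(r ^ (a-1)) * Efun a r)) +
        (ν + 1) * r * ((mufn a m' j * r ^ (mufn a m' j - 1) - r ^ (mufn a m' j + a - 1)) * Efun a r) -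
        m' * (ν + m') * (r ^ (mufn a m' j) * Efun a r)))
      = (lam + 2*j + 1) * (r ^ (mufn a m' j) * Efun a r)
        - a * j * (lam + j) * (r ^ (mufn a m' j - a) * Efun a r) := by
  have hν : ν = a * lam - 2*m' := by linarith
  subst hν
  have hrne : r ≠ 0 := hr.ne'
  have hA : (0:ℝ) < r ^ a := Real.rpow_pos_of_pos hr a
  simp only [mufn, Real.rpow_sub hr, Real.rpow_add hr, Real.rpow_one,
    Real.rpow_neg hr.le]
  field_simp
  ring

lemma dcoef_rec {a lam C : ℝ} (ha : a ≠ 0) (hlam : -1 < lam) (l j : ℕ) (hjl : j < l) :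
    (2*(j:ℝ) - 2*l) * dcoef a lam C l j
      = a*((j:ℝ)+1)*(lam+((j:ℝ)+1)) * dcoef a lam C l (j+1) := by
  have hpos : (0:ℝ) < lam + j + 1 := by
    have : (0:ℝ) ≤ j := Nat.cast_nonneg j
    linarith
  have hG : Real.Gamma (lam + (j+1:ℕ) + 1) = (lam + j + 1) * Real.Gamma (lam + j + 1) := by
    rw [show lam + ((j+1:ℕ):ℝ) + 1 = (lam + j + 1) + 1 by push_cast; ring,
      Real.Gamma_add_one hpos.ne']
  have hGne : Real.Gamma (lam + j + 1) ≠ 0 := (Real.Gamma_pos_of_pos hpos).ne'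
  have hfac : (l - j).factorial = (l - j) * (l - (j+1)).factorial := by
    rw [show l - j = (l - (j+1)) + 1 by omega, Nat.factorial_succ]
  unfold dcoef
  rw [hG, hfac, Nat.factorial_succ, pow_succ, pow_succ]
  have hlj : ((l:ℝ) - j) ≠ 0 := by
    have : (j:ℝ) + 1 ≤ (l:ℝ) := by exact_mod_cast hjl
    intro h; nlinarith
  have h1 : (j.factorial : ℝ) ≠ 0 := Nat.cast_ne_zero.mpr (Nat.factorial_ne_zero j)
  have h2 : ((l - (j+1)).factorial : ℝ) ≠ 0 := Nat.cast_ne_zero.mpr (Nat.factorial_ne_zero _)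
  push_cast [Nat.cast_sub hjl.le]
  field_simp
  ring


lemma main_real {a : ℝ} (ha : 0 < a) (ν : ℝ) (m l : ℕ)
    (hlam : -1 < (ν + 2*m)/a) (C : ℝ) {r : ℝ} (hr : 0 < r) :
    (1/a) * (r^a * Gfun a ((ν + 2*m)/a) C m l r -
      r^(-a) * (r^2 * G2fun a ((ν + 2*m)/a) C m l r +
        (ν+1)*r*G1fun a ((ν + 2*m)/a) C m l r -
        m*(ν+m)*Gfun a ((ν + 2*m)/a) C m l r))
      = ((ν+2*m)/a + 2*l + 1) * Gfun a ((ν + 2*m)/a) C m l r := by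
  set lam := (ν + 2*m)/a with hlamdef
  have hane : a ≠ 0 := ha.ne'
  have hal : a * lam = ν + 2*m := by
    rw [hlamdef]; field_simp
  set d := dcoef a lam C l with hd
  set E := Efun a r with hE
  have step1 : (1/a) * (r^a * Gfun a lam C m l r -
      r^(-a) * (r^2 * G2fun a lam C m l r +
        (ν+1)*r*G1fun a lam C m l r -
        m*(ν+m)*Gfun a lam C m l r))
      = ∑ j ∈ Finset.range (l+1),
          (1/a) * (r ^ a * (r ^ (mufn a m j) * E) -
            r ^ (-a) * (r ^ 2 *
                ((mufn a m j * ((mufn a m j - 1) * r ^ (mufn a m j - 1 - 1)) -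
                   (mufn a m j + a - 1) * r ^ (mufn a m j + a - 1 - 1)) * E +
                 (mufn a m j * r ^ (mufn a m j - 1) - r ^ (mufn a m j + a - 1)) *
                   (-(r ^ (a-1)) * E)) +
              (ν + 1) * r * ((mufn a m j * r ^ (mufn a m j - 1) -
                 r ^ (mufn a m j + a - 1)) * E) -
              m * (ν + m) * (r ^ (mufn a m j) * E))) * d j := by
    simp only [Gfun, G1fun, G2fun, Finset.mul_sum, ← Finset.sum_sub_distrib,
      ← Finset.sum_add_distrib, ← hd, ← hE]
    exact Finset.sum_congr rfl (fun j _ => by ring)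
  rw [step1]
  have step2 : ∀ j ∈ Finset.range (l+1),
      (1/a) * (r ^ a * (r ^ (mufn a m j) * E) -
            r ^ (-a) * (r ^ 2 *
                ((mufn a m j * ((mufn a m j - 1) * r ^ (mufn a m j - 1 - 1)) -
                   (mufn a m j + a - 1) * r ^ (mufn a m j + a - 1 - 1)) * E +
                 (mufn a m j * r ^ (mufn a m j - 1) - r ^ (mufn a m j + a - 1)) *
                   (-(r ^ (a-1)) * E)) +
              (ν + 1) * r * ((mufn a m j * r ^ (mufn a m j - 1) -
                 r ^ (mufn a m j + a - 1)) * E) -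
              m * (ν + m) * (r ^ (mufn a m j) * E))) * d j
      = ((lam + 2*j + 1) * (r ^ (mufn a m j) * E)
          - a * j * (lam + j) * (r ^ (mufn a m j - a) * E)) * d j := by
    intro j _
    rw [hE, term_eigen hane ν lam m j hal hr]
  rw [Finset.sum_congr rfl step2]
  rw [← sub_eq_zero, Gfun, Finset.mul_sum, ← hd, ← hE, ← Finset.sum_sub_distrib]
  have step3 : ∀ j ∈ Finset.range (l+1),
      ((lam + 2*j + 1) * (r ^ (mufn a m j) * E)
          - a * j * (lam + j) * (r ^ (mufn a m j - a) * E)) * d j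
        - (lam + 2*l + 1) * (d j * (r ^ (mufn a m j) * E))
      = (2*(j:ℝ) - 2*l) * d j * (r ^ (mufn a m j) * E)
        - a * j * (lam + j) * d j * (r ^ (mufn a m j - a) * E) := by
    intro j _; ring
  rw [Finset.sum_congr rfl step3, Finset.sum_sub_distrib, sub_eq_zero,
    Finset.sum_range_succ, Finset.sum_range_succ']
  have hz1 : (2*(l:ℝ) - 2*l) * d l * (r ^ (mufn a m l) * E) = 0 := by ring
  have hz2 : a * ((0:ℕ):ℝ) * (lam + ((0:ℕ):ℝ)) * d 0 * (r ^ (mufn a m 0 - a) * E) = 0 := by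
    simp
  rw [hz1, add_zero, hz2, add_zero]
  refine Finset.sum_congr rfl (fun j hj => ?_)
  have hjl : j < l := Finset.mem_range.mp hj
  have hmu : mufn a m (j+1) - a = mufn a m j := by
    unfold mufn; push_cast; ring
  rw [hmu]
  have hrec := dcoef_rec (C := C) hane hlam l j hjl
  rw [hd]
  calc (2*(j:ℝ) - 2*l) * dcoef a lam C l j * (r ^ (mufn a m j) * E)
      = ((2*(j:ℝ) - 2*l) * dcoef a lam C l j) * (r ^ (mufn a m j) * E) := by ring
    _ = (a*((j:ℝ)+1)*(lam+((j:ℝ)+1)) * dcoef a lam C l (j+1)) * (r ^ (mufn a m j) * E) := by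
        rw [hrec]
    _ = a * ((j+1 : ℕ):ℝ) * (lam + ((j+1:ℕ):ℝ)) * dcoef a lam C l (j+1) * (r ^ (mufn a m j) * E) := by
        push_cast; ring

lemma g_eq_G {a : ℝ} (ha : a ≠ 0) (lam C : ℝ) (m l : ℕ) {x : ℝ} (hx : 0 < x) :
    C * x ^ m * laguerre lam l ((2/a) * x ^ a) * Real.exp (-(1/a) * x ^ a)
      = Gfun a lam C m l x := by
  unfold laguerre Gfun
  rw [Finset.mul_sum, Finset.sum_mul]
  refine Finset.sum_congr rfl (fun j _ => ?_)
  unfold dcoef mufn Efun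
  have h1 : ((2/a) * x ^ a) ^ j = (2/a) ^ j * x ^ (a * (j:ℝ)) := by
    rw [mul_pow]
    congr 1
    rw [← Real.rpow_natCast (x ^ a) j, ← Real.rpow_mul hx.le]
  have h2 : x ^ m = x ^ ((m:ℕ):ℝ) := (Real.rpow_natCast x m).symm
  rw [h1, h2, Real.rpow_add hx]
  ring


/-- `f_l` is an eigenfunction of `π(𝐤) = (1/a)(r^a - r^{-a}(ϑ - m)(ϑ + ν + m))`
with eigenvalue `λ + 2l + 1`, where `λ = (ν + 2m)/a`. -/
theorem laguerreFun_eigenfunction (ν a : ℝ) (ha : 0 < a) (m : ℕ)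
    (hlam : -1 < (ν + 2 * m) / a) (l : ℕ) (r : ℝ) (hr : 0 < r) :
    (1 / (a : ℂ)) *
        (((r ^ a : ℝ) : ℂ) * laguerreFun ν a m l r -
          ((r ^ (-a) : ℝ) : ℂ) *
            ((r : ℂ) ^ 2 * deriv (deriv (laguerreFun ν a m l)) r +
              ((ν : ℂ) + 1) * (r : ℂ) * deriv (laguerreFun ν a m l) r -
              (m : ℂ) * ((ν : ℂ) + (m : ℂ)) * laguerreFun ν a m l r))
      = (((ν + 2 * m) / a : ℝ) + 2 * l + 1 : ℂ) * laguerreFun ν a m l r := by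
  have hane : a ≠ 0 := ha.ne'
  set C := Real.sqrt ((2 : ℝ) ^ ((ν + 2 * m) / a + 1) * l.factorial /
      (a ^ ((ν + 2 * m) / a) * Real.Gamma ((ν + 2 * m) / a + l + 1))) with hC
  have hfun : ∀ x ∈ Set.Ioi (0:ℝ),
      laguerreFun ν a m l x = ((Gfun a ((ν + 2 * m) / a) C m l x : ℝ) : ℂ) := by
    intro x hx
    unfold laguerreFun
    exact congrArg _ (g_eq_G hane ((ν + 2 * m) / a) C m l hx)
  have hd1 : ∀ x ∈ Set.Ioi (0:ℝ),
      deriv (laguerreFun ν a m l) x = ((G1fun a ((ν + 2 * m) / a) C m l x : ℝ) : ℂ) := by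
    intro x hx
    have hev : laguerreFun ν a m l =ᶠ[nhds x]
        (fun y => ((Gfun a ((ν + 2 * m) / a) C m l y : ℝ) : ℂ)) := by
      filter_upwards [Ioi_mem_nhds hx] with y hy using hfun y hy
    rw [hev.deriv_eq]
    exact ((hasDerivAt_Gfun hane ((ν + 2 * m) / a) C m l hx).ofReal_comp).deriv
  have hd2 : deriv (deriv (laguerreFun ν a m l)) r = ((G2fun a ((ν + 2 * m) / a) C m l r : ℝ) : ℂ) := by
    have hev : deriv (laguerreFun ν a m l) =ᶠ[nhds r]
        (fun y => ((G1fun a ((ν + 2 * m) / a) C m l y : ℝ) : ℂ)) := by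
      filter_upwards [Ioi_mem_nhds hr] with y hy using hd1 y hy
    rw [hev.deriv_eq]
    exact ((hasDerivAt_G1fun hane ((ν + 2 * m) / a) C m l hr).ofReal_comp).deriv
  rw [hfun r hr, hd1 r hr, hd2]
  exact_mod_cast main_real ha ν m l hlam C hr
end
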